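/- Let Y and H be nonnegative random variables on a probability space such that for all u > 0 and w > 0: P(Y > u) ≤ u^{-1} · E[min(H, w)] + P(H ≥ w). Then for every p ∈ (0,1): E[Y^p] ≤ (p^{-p}/(1−p)) · E[H^p]. -/

import Mathlib

open MeasureTheory Set
open scoped ENNReal

lemma key1d (p : ℝ) (hp0 : 0 < p) (hp1 : p < 1) {h : ℝ} (hh : 0 ≤ h) :
    ∫⁻ t in Set.Ioi (0:ℝ), ENNReal.ofReal (t ^ (p - 2) * min h (p * t)) =
      ENNReal.ofReal (p ^ (-p) / (1 - p) * h ^ p) := by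
  rcases hh.eq_or_lt with rfl | hhpos
  · have : ∀ t ∈ Set.Ioi (0:ℝ),
        ENNReal.ofReal (t ^ (p - 2) * min 0 (p * t)) = 0 := by
      intro t ht
      have ht' := Set.mem_Ioi.mp ht
      rw [min_eq_left (by positivity)]
      simp
    rw [setLIntegral_congr_fun measurableSet_Ioi this]
    simp [Real.zero_rpow hp0.ne']
  · set c : ℝ := h / p with hc_def
    have hc : 0 < c := div_pos hhpos hp0
    have hpc : p * c = h := by rw [hc_def]; field_simp
    have hsplit : Set.Ioc (0:ℝ) c ∪ Set.Ioi c = Set.Ioi 0 := Set.Ioc_union_Ioi_eq_Ioi hc.le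
    rw [← hsplit, lintegral_union measurableSet_Ioi (Set.Ioc_disjoint_Ioi le_rfl)]
    have e1 : ∫⁻ t in Set.Ioc (0:ℝ) c, ENNReal.ofReal (t ^ (p - 2) * min h (p * t)) =
        ENNReal.ofReal (c ^ p) := by
      have congr1 : ∀ t ∈ Set.Ioc (0:ℝ) c,
          ENNReal.ofReal (t ^ (p - 2) * min h (p * t)) = ENNReal.ofReal (p * t ^ (p - 1)) := by
        intro t ht
        have ht0 : 0 < t := ht.1
        have hmin : min h (p * t) = p * t :=
          min_eq_right (by nlinarith [ht.2])
        have hpow : t ^ (p - 1) = t ^ (p - 2) * t := by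
          have := Real.rpow_add_one ht0.ne' (p - 2)
          rw [show p - 2 + 1 = p - 1 by ring] at this
          exact this
        rw [hmin, hpow]; ring_nf
      rw [setLIntegral_congr_fun measurableSet_Ioc congr1]
      have hint : IntervalIntegrable (fun t : ℝ => p * t ^ (p - 1)) volume 0 c :=
        (intervalIntegral.intervalIntegrable_rpow' (by linarith)).const_mul p
      rw [← ofReal_integral_eq_lintegral_ofReal hint.1]
      · rw [← intervalIntegral.integral_of_le hc.le, intervalIntegral.integral_const_mul,
          integral_rpow (Or.inl (by linarith))]
        rw [show p - 1 + 1 = p by ring, Real.zero_rpow hp0.ne']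
        congr 1
        field_simp
        ring
      · filter_upwards [ae_restrict_mem measurableSet_Ioc] with t ht
        have := ht.1
        positivity
    have e2 : ∫⁻ t in Set.Ioi c, ENNReal.ofReal (t ^ (p - 2) * min h (p * t)) =
        ENNReal.ofReal (h * (c ^ (p - 1) / (1 - p))) := by
      have congr2 : ∀ t ∈ Set.Ioi c,
          ENNReal.ofReal (t ^ (p - 2) * min h (p * t)) = ENNReal.ofReal (h * t ^ (p - 2)) := by
        intro t ht
        have hmin : min h (p * t) = h := min_eq_left (by nlinarith [mem_Ioi.mp ht])
        rw [hmin, mul_comm]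
      rw [setLIntegral_congr_fun measurableSet_Ioi congr2]
      have hint : IntegrableOn (fun t : ℝ => h * t ^ (p - 2)) (Set.Ioi c) :=
        (integrableOn_Ioi_rpow_of_lt (by linarith) hc).const_mul h
      rw [← ofReal_integral_eq_lintegral_ofReal hint]
      · rw [integral_const_mul, integral_Ioi_rpow_of_lt (by linarith) hc]
        congr 1
        rw [show p - 2 + 1 = p - 1 by ring]
        have hne : p - 1 ≠ 0 := by linarith
        have hne2 : (1:ℝ) - p ≠ 0 := by linarith
        field_simp
        ring
      · filter_upwards [ae_restrict_mem measurableSet_Ioi] with t ht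
        have h1 : 0 < t := lt_trans hc (mem_Ioi.mp ht)
        positivity
    rw [e1, e2, ← ENNReal.ofReal_add (by positivity)
      (mul_nonneg hhpos.le (div_nonneg (Real.rpow_nonneg hc.le _) (by linarith)))]
    congr 1
    have hppos : (0:ℝ) < p ^ p := Real.rpow_pos_of_pos hp0 p
    have hcp : c ^ p = h ^ p / p ^ p := Real.div_rpow hhpos.le hp0.le p
    have hcp1 : c ^ (p - 1) = h ^ (p - 1) / p ^ (p - 1) := Real.div_rpow hhpos.le hp0.le (p-1)
    have hh1 : h ^ (p - 1) = h ^ p / h := Real.rpow_sub_one hhpos.ne' p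
    have hp1' : p ^ (p - 1) = p ^ p / p := Real.rpow_sub_one hp0.ne' p
    have hneg : p ^ (-p) = (p ^ p)⁻¹ := Real.rpow_neg hp0.le p
    rw [hcp, hcp1, hh1, hp1', hneg]
    have h1p : (1:ℝ) - p ≠ 0 := by linarith
    field_simp
    ring

theorem stmt_7 {Ω : Type*} [MeasurableSpace Ω] (P : Measure Ω) [IsProbabilityMeasure P]
    (Y H : Ω → ℝ) (hYm : Measurable Y) (hHm : Measurable H)
    (hY0 : ∀ ω, 0 ≤ Y ω) (hH0 : ∀ ω, 0 ≤ H ω)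
    (htail : ∀ u w : ℝ, 0 < u → 0 < w →
      P {ω | u < Y ω} ≤
        ENNReal.ofReal u⁻¹ * ∫⁻ ω, ENNReal.ofReal (min (H ω) w) ∂P + P {ω | w ≤ H ω})
    (p : ℝ) (hp0 : 0 < p) (hp1 : p < 1) :
    ∫⁻ ω, ENNReal.ofReal (Y ω ^ p) ∂P ≤
      ENNReal.ofReal (p ^ (-p) / (1 - p)) * ∫⁻ ω, ENNReal.ofReal (H ω ^ p) ∂P := by
  have h1p : (0:ℝ) < 1 - p := by linarith
  set EH : ℝ≥0∞ := ∫⁻ ω, ENNReal.ofReal (H ω ^ p) ∂P with hEH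
  -- measurability facts
  have hker : Measurable fun q : ℝ × Ω => ENNReal.ofReal (min (H q.2) (p * q.1)) := by fun_prop
  have hImeas : Measurable fun t : ℝ => ∫⁻ ω, ENNReal.ofReal (min (H ω) (p * t)) ∂P :=
    Measurable.lintegral_prod_right (f := fun (t : ℝ) (ω : Ω) =>
      ENNReal.ofReal (min (H ω) (p * t))) hker
  have hfA : Measurable fun t : ℝ =>
      ENNReal.ofReal t⁻¹ * (∫⁻ ω, ENNReal.ofReal (min (H ω) (p * t)) ∂P) *
        ENNReal.ofReal (t ^ (p - 1)) := by fun_prop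
  -- Step 1: layer cake for Y
  rw [lintegral_rpow_eq_lintegral_meas_lt_mul P (Filter.Eventually.of_forall hY0)
    hYm.aemeasurable hp0]
  -- Step 2: tail bound
  have step2 : ∫⁻ t in Set.Ioi (0:ℝ), P {ω | t < Y ω} * ENNReal.ofReal (t ^ (p - 1)) ≤
      ∫⁻ t in Set.Ioi (0:ℝ),
        (ENNReal.ofReal t⁻¹ * (∫⁻ ω, ENNReal.ofReal (min (H ω) (p * t)) ∂P) *
            ENNReal.ofReal (t ^ (p - 1)) +
          P {ω | p * t ≤ H ω} * ENNReal.ofReal (t ^ (p - 1))) := by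
    apply lintegral_mono_ae
    filter_upwards [ae_restrict_mem measurableSet_Ioi] with t ht
    have ht0 : (0:ℝ) < t := ht
    rw [← add_mul]
    exact mul_le_mul_left (htail t (p * t) ht0 (by positivity)) _
  -- split the sum
  rw [lintegral_add_left hfA] at step2
  -- A-term
  have hA : ∫⁻ t in Set.Ioi (0:ℝ),
      ENNReal.ofReal t⁻¹ * (∫⁻ ω, ENNReal.ofReal (min (H ω) (p * t)) ∂P) *
        ENNReal.ofReal (t ^ (p - 1)) = ENNReal.ofReal (p ^ (-p) / (1 - p)) * EH := by
    have step1 : ∀ t ∈ Set.Ioi (0:ℝ),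
        ENNReal.ofReal t⁻¹ * (∫⁻ ω, ENNReal.ofReal (min (H ω) (p * t)) ∂P) *
          ENNReal.ofReal (t ^ (p - 1)) =
        ∫⁻ ω, ENNReal.ofReal (t ^ (p - 2) * min (H ω) (p * t)) ∂P := by
      intro t ht
      have ht0 : (0:ℝ) < t := ht
      have hexp : t⁻¹ * t ^ (p - 1) = t ^ (p - 2) := by
        rw [← Real.rpow_neg_one t, ← Real.rpow_add ht0,
          show (-1:ℝ) + (p - 1) = p - 2 by ring]
      rw [mul_comm (ENNReal.ofReal t⁻¹) _, mul_assoc,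
        ← ENNReal.ofReal_mul (inv_nonneg.mpr ht0.le), hexp, mul_comm,
        ← lintegral_const_mul' _ _ ENNReal.ofReal_ne_top]
      congr 1 with ω
      rw [← ENNReal.ofReal_mul (Real.rpow_nonneg ht0.le _)]
    rw [setLIntegral_congr_fun measurableSet_Ioi step1]
    rw [lintegral_lintegral_swap (by fun_prop)]
    have key : ∀ ω, ∫⁻ t in Set.Ioi (0:ℝ),
        ENNReal.ofReal (t ^ (p - 2) * min (H ω) (p * t)) =
        ENNReal.ofReal (p ^ (-p) / (1 - p) * H ω ^ p) := fun ω => key1d p hp0 hp1 (hH0 ω)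
    simp_rw [key, ENNReal.ofReal_mul (by positivity : (0:ℝ) ≤ p ^ (-p) / (1 - p)),
      lintegral_const_mul' _ _ ENNReal.ofReal_ne_top]
    rfl
  -- B-term
  have hB : ENNReal.ofReal p *
      ∫⁻ t in Set.Ioi (0:ℝ), P {ω | p * t ≤ H ω} * ENNReal.ofReal (t ^ (p - 1)) =
      ENNReal.ofReal (p ^ (-p)) * EH := by
    have hlc := lintegral_rpow_eq_lintegral_meas_le_mul P (f := fun ω => H ω / p)
      (Filter.Eventually.of_forall fun ω => div_nonneg (hH0 ω) hp0.le)
      (hHm.div_const p).aemeasurable hp0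
    have hset : ∀ t : ℝ, {a : Ω | t ≤ H a / p} = {ω : Ω | p * t ≤ H ω} := by
      intro t; ext ω
      simp only [Set.mem_setOf_eq, le_div_iff₀ hp0, mul_comm]
    simp_rw [hset] at hlc
    rw [← hlc]
    have hval : ∀ ω, ENNReal.ofReal ((H ω / p) ^ p) =
        ENNReal.ofReal (p ^ (-p)) * ENNReal.ofReal (H ω ^ p) := by
      intro ω
      rw [← ENNReal.ofReal_mul (by positivity : (0:ℝ) ≤ p ^ (-p))]
      congr 1
      rw [Real.div_rpow (hH0 ω) hp0.le, Real.rpow_neg hp0.le, div_eq_mul_inv, mul_comm]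
    simp_rw [hval, lintegral_const_mul' _ _ ENNReal.ofReal_ne_top]
    rfl
  calc ENNReal.ofReal p *
      ∫⁻ t in Set.Ioi (0:ℝ), P {ω | t < Y ω} * ENNReal.ofReal (t ^ (p - 1))
      ≤ ENNReal.ofReal p * (ENNReal.ofReal (p ^ (-p) / (1 - p)) * EH +
          ∫⁻ t in Set.Ioi (0:ℝ), P {ω | p * t ≤ H ω} * ENNReal.ofReal (t ^ (p - 1))) := by
        rw [← hA]; exact mul_le_mul_right step2 _
    _ = ENNReal.ofReal (p * (p ^ (-p) / (1 - p))) * EH + ENNReal.ofReal (p ^ (-p)) * EH := by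
        rw [mul_add, hB, ← mul_assoc, ← ENNReal.ofReal_mul hp0.le]
    _ = ENNReal.ofReal (p * (p ^ (-p) / (1 - p)) + p ^ (-p)) * EH := by
        rw [← add_mul, ← ENNReal.ofReal_add (by positivity) (by positivity)]
    _ = ENNReal.ofReal (p ^ (-p) / (1 - p)) * EH := by
        congr 2
        field_simp
        ring
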